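/- Let Σ ∈ H(n) be Hermitian positive definite and G(z) = (zI − A)⁻¹B. If there exists a bounded coercive spectral density Φ (i.e., Φ and Φ⁻¹ both essentially bounded, Φ(e^{iθ}) ≥ cI > 0) with ∫ G Φ G* = Σ, then there exists H ∈ ℂ^{m×n} such that Σ − AΣA* = BH + H*B*. -/

import Mathlib

open Matrix MeasureTheory
open scoped ComplexOrder

/-- Transfer function G(e^{iθ}) = (e^{iθ}I − A)⁻¹ B. -/
noncomputable def Gtf {n m : ℕ} (A : Matrix (Fin n) (Fin n) ℂ)
    (B : Matrix (Fin n) (Fin m) ℂ) (θ : ℝ) : Matrix (Fin n) (Fin m) ℂ :=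
  (Complex.exp (θ * Complex.I) • (1 : Matrix (Fin n) (Fin n) ℂ) - A)⁻¹ * B

/-- Γ(Φ) = (1/2π) ∫₀^{2π} G Φ G* dθ, computed entrywise. -/
noncomputable def GammaOp {n m : ℕ} (A : Matrix (Fin n) (Fin n) ℂ)
    (B : Matrix (Fin n) (Fin m) ℂ) (Φ : ℝ → Matrix (Fin m) (Fin m) ℂ) :
    Matrix (Fin n) (Fin n) ℂ := fun i j =>
  (∫ θ in (0:ℝ)..(2 * Real.pi), ((Gtf A B θ) * (Φ θ) * (Gtf A B θ)ᴴ) i j) /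
    (2 * Real.pi)


/-- A convenient class of integrands: measurable and bounded on [0, 2π]. -/
def Good (f : ℝ → ℂ) : Prop :=
  Measurable f ∧ ∃ C : ℝ, ∀ θ ∈ Set.uIcc (0:ℝ) (2*Real.pi), ‖f θ‖ ≤ C

lemma Good.intervalIntegrable {f : ℝ → ℂ} (hf : Good f) :
    IntervalIntegrable f MeasureTheory.volume 0 (2*Real.pi) := by
  obtain ⟨hm, C, hC⟩ := hf
  rw [intervalIntegrable_iff]
  refine ⟨hm.aestronglyMeasurable, ?_⟩
  haveI : IsFiniteMeasure (MeasureTheory.volume.restrict (Set.uIoc (0:ℝ) (2*Real.pi))) :=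
    ⟨by rw [Measure.restrict_apply_univ, Set.uIoc]; exact measure_Ioc_lt_top⟩
  apply MeasureTheory.HasFiniteIntegral.of_bounded (C := C)
  refine (ae_restrict_iff' measurableSet_uIoc).2 (ae_of_all _ ?_)
  exact fun x hx => hC x (Set.uIoc_subset_uIcc hx)

lemma Good.const (c : ℂ) : Good fun _ => c :=
  ⟨measurable_const, ‖c‖, fun _ _ => le_rfl⟩

lemma Good.add {f g : ℝ → ℂ} (hf : Good f) (hg : Good g) : Good fun θ => f θ + g θ := by
  obtain ⟨hfm, C1, hC1⟩ := hf; obtain ⟨hgm, C2, hC2⟩ := hg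
  exact ⟨hfm.add hgm, C1 + C2, fun θ hθ =>
    (norm_add_le _ _).trans (add_le_add (hC1 θ hθ) (hC2 θ hθ))⟩

lemma Good.mul {f g : ℝ → ℂ} (hf : Good f) (hg : Good g) : Good fun θ => f θ * g θ := by
  obtain ⟨hfm, C1, hC1⟩ := hf; obtain ⟨hgm, C2, hC2⟩ := hg
  refine ⟨hfm.mul hgm, max C1 0 * max C2 0, fun θ hθ => ?_⟩
  rw [norm_mul]
  exact mul_le_mul ((hC1 θ hθ).trans (le_max_left _ _))
    ((hC2 θ hθ).trans (le_max_left _ _)) (norm_nonneg _) (le_max_right _ _)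

lemma Good.conj {f : ℝ → ℂ} (hf : Good f) : Good fun θ => (starRingEnd ℂ) (f θ) := by
  obtain ⟨hfm, C, hC⟩ := hf
  exact ⟨(Complex.continuous_conj.measurable).comp hfm, C, fun θ hθ => by
    simpa using hC θ hθ⟩

lemma Good.sum {ι : Type*} {s : Finset ι} {f : ι → ℝ → ℂ}
    (h : ∀ i ∈ s, Good (f i)) : Good fun θ => ∑ i ∈ s, f i θ := by
  classical
  induction s using Finset.cons_induction with
  | empty => simpa using Good.const 0
  | cons a s ha ih =>
    simp only [Finset.sum_cons]
    exact (h a (Finset.mem_cons_self a s)).add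
      (ih fun i hi => h i (Finset.mem_cons_of_mem hi))

def GoodM {k l : ℕ} (M : ℝ → Matrix (Fin k) (Fin l) ℂ) : Prop :=
  ∀ i j, Good fun θ => M θ i j

lemma GoodM.mul {k l r : ℕ} {M : ℝ → Matrix (Fin k) (Fin l) ℂ}
    {N : ℝ → Matrix (Fin l) (Fin r) ℂ} (hM : GoodM M) (hN : GoodM N) :
    GoodM fun θ => M θ * N θ := by
  intro i j
  simp only [Matrix.mul_apply]
  exact Good.sum fun p _ => (hM i p).mul (hN p j)

lemma GoodM.const {k l : ℕ} (C : Matrix (Fin k) (Fin l) ℂ) : GoodM fun _ => C :=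
  fun i j => Good.const (C i j)

lemma GoodM.conjTranspose {k l : ℕ} {M : ℝ → Matrix (Fin k) (Fin l) ℂ} (hM : GoodM M) :
    GoodM fun θ => (M θ)ᴴ := fun i j => (hM j i).conj

lemma GoodM.add {k l : ℕ} {M N : ℝ → Matrix (Fin k) (Fin l) ℂ}
    (hM : GoodM M) (hN : GoodM N) : GoodM fun θ => M θ + N θ :=
  fun i j => (hM i j).add (hN i j)

lemma GoodM.smul {k l : ℕ} (c : ℂ) {M : ℝ → Matrix (Fin k) (Fin l) ℂ}
    (hM : GoodM M) : GoodM fun θ => c • M θ :=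
  fun i j => by simpa [Matrix.smul_apply, smul_eq_mul] using (Good.const c).mul (hM i j)

lemma gtf_det_ne {n : ℕ} (A : Matrix (Fin n) (Fin n) ℂ)
    (hstab : ∀ z : ℂ, (A - z • (1 : Matrix (Fin n) (Fin n) ℂ)).det = 0 → ‖z‖ < 1)
    (θ : ℝ) : (Complex.exp (θ * Complex.I) • (1 : Matrix (Fin n) (Fin n) ℂ) - A).det ≠ 0 := by
  intro h
  set z := Complex.exp (θ * Complex.I) with hz
  have h2 : (A - z • (1 : Matrix (Fin n) (Fin n) ℂ)).det = 0 := by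
    have : A - z • (1 : Matrix (Fin n) (Fin n) ℂ) =
        -(z • (1 : Matrix (Fin n) (Fin n) ℂ) - A) := (neg_sub _ _).symm
    rw [this, Matrix.det_neg, h, mul_zero]
  have habs : ‖z‖ = 1 := by
    rw [hz, Complex.norm_exp]
    simp
  have := hstab z h2
  rw [habs] at this
  exact lt_irrefl 1 this

lemma gtf_eq {n m : ℕ} (A : Matrix (Fin n) (Fin n) ℂ) (B : Matrix (Fin n) (Fin m) ℂ)
    (hstab : ∀ z : ℂ, (A - z • (1 : Matrix (Fin n) (Fin n) ℂ)).det = 0 → ‖z‖ < 1)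
    (θ : ℝ) :
    Complex.exp (θ * Complex.I) • Gtf A B θ = A * Gtf A B θ + B := by
  have h := gtf_det_ne A hstab θ
  have key : (Complex.exp (θ * Complex.I) • (1 : Matrix (Fin n) (Fin n) ℂ) - A) *
      Gtf A B θ = B := by
    rw [Gtf, ← Matrix.mul_assoc, Matrix.mul_nonsing_inv _ (isUnit_iff_ne_zero.mpr h), Matrix.one_mul]
  have expand : (Complex.exp (θ * Complex.I) • (1 : Matrix (Fin n) (Fin n) ℂ) - A) *
      Gtf A B θ = Complex.exp (θ * Complex.I) • Gtf A B θ - A * Gtf A B θ := by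
    rw [Matrix.sub_mul, Matrix.smul_mul, Matrix.one_mul]
  rw [expand] at key
  rw [eq_add_of_sub_eq key, add_comm]

lemma gtf_cont {n m : ℕ} (A : Matrix (Fin n) (Fin n) ℂ) (B : Matrix (Fin n) (Fin m) ℂ)
    (hstab : ∀ z : ℂ, (A - z • (1 : Matrix (Fin n) (Fin n) ℂ)).det = 0 → ‖z‖ < 1)
    (i : Fin n) (j : Fin m) : Continuous fun θ => Gtf A B θ i j := by
  have hM : Continuous fun θ : ℝ =>
      (Complex.exp (θ * Complex.I) • (1 : Matrix (Fin n) (Fin n) ℂ) - A) := by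
    apply Continuous.sub _ continuous_const
    apply Continuous.smul (f := fun θ : ℝ => Complex.exp (θ * Complex.I)) _ continuous_const
    exact Complex.continuous_exp.comp (by continuity)
  have hdet : Continuous fun θ : ℝ =>
      (Complex.exp (θ * Complex.I) • (1 : Matrix (Fin n) (Fin n) ℂ) - A).det :=
    hM.matrix_det
  have hadj : Continuous fun θ : ℝ =>
      (Complex.exp (θ * Complex.I) • (1 : Matrix (Fin n) (Fin n) ℂ) - A).adjugate :=
    hM.matrix_adjugate
  have hinv : Continuous fun θ : ℝ =>
      (Complex.exp (θ * Complex.I) • (1 : Matrix (Fin n) (Fin n) ℂ) - A)⁻¹ := by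
    simp only [Matrix.inv_def, Ring.inverse_eq_inv']
    exact (hdet.inv₀ (gtf_det_ne A hstab)).smul hadj
  have : Continuous fun θ : ℝ =>
      ((Complex.exp (θ * Complex.I) • (1 : Matrix (Fin n) (Fin n) ℂ) - A)⁻¹ * B) i j :=
    (hinv.matrix_mul continuous_const).matrix_elem i j
  exact this

lemma gtf_good {n m : ℕ} (A : Matrix (Fin n) (Fin n) ℂ) (B : Matrix (Fin n) (Fin m) ℂ)
    (hstab : ∀ z : ℂ, (A - z • (1 : Matrix (Fin n) (Fin n) ℂ)).det = 0 → ‖z‖ < 1) :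
    GoodM (fun θ => Gtf A B θ) := by
  intro i j
  have hc := gtf_cont A B hstab i j
  refine ⟨hc.measurable, ?_⟩
  obtain ⟨C, hC⟩ := isCompact_uIcc.exists_bound_of_continuousOn hc.continuousOn
  exact ⟨C, hC⟩

lemma entry_expand {p k l q : ℕ} (C : Matrix (Fin p) (Fin k) ℂ)
    (D : Matrix (Fin l) (Fin q) ℂ) (X : Matrix (Fin k) (Fin l) ℂ) (i : Fin p) (j : Fin q) :
    (C * X * D) i j = ∑ b, ∑ a, C i a * X a b * D b j := by
  simp [Matrix.mul_apply, Finset.sum_mul]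

lemma integral_sandwich {p k l q : ℕ} (C : Matrix (Fin p) (Fin k) ℂ)
    (D : Matrix (Fin l) (Fin q) ℂ) (M : ℝ → Matrix (Fin k) (Fin l) ℂ) (hM : GoodM M)
    (i : Fin p) (j : Fin q) :
    ∫ θ in (0:ℝ)..(2*Real.pi), (C * M θ * D) i j
      = (C * (Matrix.of fun a b => ∫ θ in (0:ℝ)..(2*Real.pi), M θ a b) * D) i j := by
  rw [entry_expand]
  simp only [fun θ => entry_expand C D (M θ) i j]
  rw [intervalIntegral.integral_finset_sum]
  · refine Finset.sum_congr rfl fun b _ => ?_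
    rw [intervalIntegral.integral_finset_sum]
    · refine Finset.sum_congr rfl fun a _ => ?_
      rw [intervalIntegral.integral_mul_const, intervalIntegral.integral_const_mul]
      rfl
    · intro a _
      exact (((Good.const _).mul (hM a b)).mul (Good.const _)).intervalIntegrable
  · intro b _
    exact (Good.sum fun a _ =>
      ((Good.const _).mul (hM a b)).mul (Good.const _)).intervalIntegrable

lemma intervalIntegral_conj (f : ℝ → ℂ) (a b : ℝ) :
    ∫ θ in a..b, (starRingEnd ℂ) (f θ) = (starRingEnd ℂ) (∫ θ in a..b, f θ) := by
  simp only [intervalIntegral]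
  rw [integral_conj, integral_conj, map_sub]

lemma pointwise_id {n m : ℕ} (A : Matrix (Fin n) (Fin n) ℂ) (B : Matrix (Fin n) (Fin m) ℂ)
    (hstab : ∀ z : ℂ, (A - z • (1 : Matrix (Fin n) (Fin n) ℂ)).det = 0 → ‖z‖ < 1)
    (Φ : Matrix (Fin m) (Fin m) ℂ) (hherm : Φᴴ = Φ) (θ : ℝ) :
    Gtf A B θ * Φ * (Gtf A B θ)ᴴ - A * (Gtf A B θ * Φ * (Gtf A B θ)ᴴ) * Aᴴ =
      B * (Φ * (Gtf A B θ)ᴴ * Aᴴ + ((1:ℂ)/2) • (Φ * Bᴴ)) +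
      (Φ * (Gtf A B θ)ᴴ * Aᴴ + ((1:ℂ)/2) • (Φ * Bᴴ))ᴴ * Bᴴ := by
  set G := Gtf A B θ with hG
  set z := Complex.exp (θ * Complex.I) with hzdef
  have hz : z • G = A * G + B := gtf_eq A B hstab θ
  have habs : ‖z‖ = 1 := by rw [hzdef, Complex.norm_exp]; simp
  have hz1 : z * (starRingEnd ℂ) z = 1 := by
    rw [Complex.mul_conj, Complex.normSq_eq_norm_sq, habs]
    norm_num
  have e1 : (z • G) * Φ * (z • G)ᴴ = (z * (starRingEnd ℂ) z) • (G * Φ * Gᴴ) := by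
    rw [Matrix.conjTranspose_smul, Matrix.smul_mul, Matrix.smul_mul, Matrix.mul_smul,
      smul_smul]
    rfl
  have key : G * Φ * Gᴴ = (A * G + B) * Φ * (A * G + B)ᴴ := by
    calc G * Φ * Gᴴ = (z * (starRingEnd ℂ) z) • (G * Φ * Gᴴ) := by rw [hz1, one_smul]
      _ = (z • G) * Φ * (z • G)ᴴ := e1.symm
      _ = (A * G + B) * Φ * (A * G + B)ᴴ := by rw [hz]
  have halves : ((1:ℂ)/2) • (B * (Φ * Bᴴ)) + ((1:ℂ)/2) • (B * (Φ * Bᴴ)) = B * (Φ * Bᴴ) := by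
    rw [← add_smul]; norm_num
  rw [sub_eq_iff_eq_add]
  conv_lhs => rw [key]
  simp only [Matrix.conjTranspose_add, Matrix.conjTranspose_mul, Matrix.conjTranspose_smul,
    Matrix.add_mul, Matrix.mul_add, Matrix.smul_mul, Matrix.mul_smul, hherm,
    Matrix.conjTranspose_conjTranspose, Matrix.mul_assoc]
  rw [show star ((1:ℂ)/2) = (1:ℂ)/2 by norm_num]
  conv_lhs => rw [← halves]
  abel

theorem stmt_8 {n m : ℕ} (A : Matrix (Fin n) (Fin n) ℂ) (B : Matrix (Fin n) (Fin m) ℂ)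
    (hstab : ∀ z : ℂ, (A - z • (1 : Matrix (Fin n) (Fin n) ℂ)).det = 0 → ‖z‖ < 1)
    (hB : B.rank = m)
    (hreach : ∀ x : Fin n → ℂ, (∀ k : ℕ, Matrix.vecMul x (A ^ k * B) = 0) → x = 0)
    (Sig : Matrix (Fin n) (Fin n) ℂ) (hSig : Sig.PosDef)
    (hexists : ∃ Φ : ℝ → Matrix (Fin m) (Fin m) ℂ,
      (∀ i j, Measurable fun θ => Φ θ i j) ∧
      Function.Periodic Φ (2 * Real.pi) ∧ (∀ θ, (Φ θ).IsHermitian) ∧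
      (∃ C : ℝ, ∀ θ i j, ‖Φ θ i j‖ ≤ C) ∧
      (∃ c : ℝ, 0 < c ∧ ∀ θ,
        ((Φ θ) - c • (1 : Matrix (Fin m) (Fin m) ℂ)).PosSemidef) ∧
      GammaOp A B Φ = Sig) :
    ∃ H : Matrix (Fin m) (Fin n) ℂ,
      Sig - A * Sig * Aᴴ = B * H + Hᴴ * Bᴴ := by
  obtain ⟨Φ, hmeas, hper, hherm, ⟨C, hbd⟩, hcoer, hΓ⟩ := hexists
  have hGgood : GoodM (fun θ => Gtf A B θ) := gtf_good A B hstab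
  have hΦgood : GoodM Φ := fun i j =>
    ⟨hmeas i j, C, fun θ _ => by exact hbd θ i j⟩
  have hGH : GoodM (fun θ => (Gtf A B θ)ᴴ) := hGgood.conjTranspose
  set f1 : ℝ → Matrix (Fin n) (Fin n) ℂ :=
    fun θ => Gtf A B θ * Φ θ * (Gtf A B θ)ᴴ with hf1
  have hf1good : GoodM f1 := (hGgood.mul hΦgood).mul hGH
  set N : ℝ → Matrix (Fin m) (Fin n) ℂ :=
    fun θ => Φ θ * (Gtf A B θ)ᴴ * Aᴴ + ((1:ℂ)/2) • (Φ θ * Bᴴ) with hN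
  have hNgood : GoodM N := ((hΦgood.mul hGH).mul (GoodM.const Aᴴ)).add
    (GoodM.smul _ (hΦgood.mul (GoodM.const Bᴴ)))
  set c : ℂ := ((2:ℂ) * Real.pi)⁻¹ with hc
  set M0 : Matrix (Fin n) (Fin n) ℂ :=
    Matrix.of fun p q => ∫ θ in (0:ℝ)..(2*Real.pi), f1 θ p q with hM0
  set N0 : Matrix (Fin m) (Fin n) ℂ :=
    Matrix.of fun p q => ∫ θ in (0:ℝ)..(2*Real.pi), N θ p q with hN0
  have hSigM : Sig = c • M0 := by
    rw [← hΓ]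
    ext i j
    simp only [GammaOp, Matrix.smul_apply, hM0, Matrix.of_apply, smul_eq_mul, hc]
    rw [div_eq_mul_inv, mul_comm]
  have hstarc : star c = c := by
    simp [hc, Complex.star_def, map_inv₀, _root_.map_mul, Complex.conj_ofReal]
  refine ⟨c • N0, ?_⟩
  have hHconj : (c • N0)ᴴ = c • N0ᴴ := by rw [Matrix.conjTranspose_smul, hstarc]
  rw [hSigM, hHconj, Matrix.mul_smul, Matrix.smul_mul, Matrix.mul_smul, Matrix.smul_mul,
    ← smul_sub, ← smul_add]
  congr 1
  ext i j
  have hAM : (A * M0 * Aᴴ) i j = ∫ θ in (0:ℝ)..(2*Real.pi), (A * f1 θ * Aᴴ) i j :=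
    (integral_sandwich A Aᴴ f1 hf1good i j).symm
  have hBN : (B * N0) i j = ∫ θ in (0:ℝ)..(2*Real.pi), (B * N θ) i j := by
    have h := integral_sandwich B (1 : Matrix (Fin n) (Fin n) ℂ) N hNgood i j
    simpa [Matrix.mul_one] using h.symm
  have hN0H : N0ᴴ = Matrix.of fun p q => ∫ θ in (0:ℝ)..(2*Real.pi), (N θ)ᴴ p q := by
    ext p q
    simp only [Matrix.conjTranspose_apply, hN0, Matrix.of_apply]
    exact (intervalIntegral_conj _ _ _).symm
  have hNB : (N0ᴴ * Bᴴ) i j = ∫ θ in (0:ℝ)..(2*Real.pi), ((N θ)ᴴ * Bᴴ) i j := by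
    rw [hN0H]
    have h := integral_sandwich (1 : Matrix (Fin n) (Fin n) ℂ) Bᴴ
      (fun θ => (N θ)ᴴ) hNgood.conjTranspose i j
    simpa [Matrix.one_mul] using h.symm
  have gAf1A : GoodM fun θ => A * f1 θ * Aᴴ :=
    ((GoodM.const A).mul hf1good).mul (GoodM.const Aᴴ)
  have gBN : GoodM fun θ => B * N θ := (GoodM.const B).mul hNgood
  have gNB : GoodM fun θ => (N θ)ᴴ * Bᴴ := hNgood.conjTranspose.mul (GoodM.const Bᴴ)
  rw [Matrix.sub_apply, Matrix.add_apply, hAM, hBN, hNB]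
  have hM0e : M0 i j = ∫ θ in (0:ℝ)..(2*Real.pi), f1 θ i j := rfl
  rw [hM0e,
    ← intervalIntegral.integral_sub (hf1good i j).intervalIntegrable
      (gAf1A i j).intervalIntegrable,
    ← intervalIntegral.integral_add (gBN i j).intervalIntegrable
      (gNB i j).intervalIntegrable]
  apply intervalIntegral.integral_congr
  intro θ _
  have := pointwise_id A B hstab (Φ θ) (hherm θ) θ
  calc f1 θ i j - (A * f1 θ * Aᴴ) i j = (f1 θ - A * f1 θ * Aᴴ) i j := by
        rw [Matrix.sub_apply]
    _ = (B * N θ + (N θ)ᴴ * Bᴴ) i j := by rw [hf1, hN]; rw [this]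
    _ = (B * N θ) i j + ((N θ)ᴴ * Bᴴ) i j := by rw [Matrix.add_apply]
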